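/- Let C ⊆ 2^{[n]} be an intersection complete code. If C has an open convex realization in ℝ^d, then C has a closed convex realization in ℝ^d. (Hence cdim(C) ≤ odim(C) for intersection complete codes.) -/

import Mathlib

/-- The combinatorial code of a collection of sets `U` in `X`: the set of
all `σ ⊆ [n]` such that some point `x ∈ X` lies in exactly the `U i` with `i ∈ σ`. -/
def codeOf {n : ℕ} {X : Type*} (U : Fin n → Set X) : Set (Finset (Fin n)) :=
  {σ | ∃ x : X, ∀ i, i ∈ σ ↔ x ∈ U i}

/-- `C` has a realization by convex open sets in `ℝ^d`. -/
def HasOpenRealization (n : ℕ) (C : Set (Finset (Fin n))) (d : ℕ) : Prop :=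
  ∃ U : Fin n → Set (EuclideanSpace ℝ (Fin d)),
    (∀ i, Convex ℝ (U i)) ∧ (∀ i, IsOpen (U i)) ∧ codeOf U = C

/-- `C` has a realization by convex closed sets in `ℝ^d`. -/
def HasClosedRealization (n : ℕ) (C : Set (Finset (Fin n))) (d : ℕ) : Prop :=
  ∃ U : Fin n → Set (EuclideanSpace ℝ (Fin d)),
    (∀ i, Convex ℝ (U i)) ∧ (∀ i, IsClosed (U i)) ∧ codeOf U = C

open Metric

/-- Intersection of a nonempty finite family of codewords of an
intersection-complete code is a codeword. -/
lemma inf_mem_of_intersectionComplete {n : ℕ} {C : Set (Finset (Fin n))}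
    (hIC : ∀ c₁ ∈ C, ∀ c₂ ∈ C, c₁ ∩ c₂ ∈ C)
    (S : Finset (Finset (Fin n))) (hS : S.Nonempty) (hSC : ∀ t ∈ S, t ∈ C) :
    S.inf id ∈ C := by
  induction hS using Finset.Nonempty.cons_induction with
  | singleton a => simpa using hSC a (by simp)
  | cons a s ha hs ih =>
    rw [Finset.inf_cons]
    have h1 : a ∈ C := hSC a (Finset.mem_cons_self a s)
    have h2 : s.inf id ∈ C := ih (fun t ht => hSC t (Finset.mem_cons_of_mem ht))
    have := hIC a h1 (s.inf id) h2
    simpa [Finset.inf_eq_inter] using this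

/-- For an intersection complete code, an open convex realization in `ℝ^d` yields a
closed convex realization in `ℝ^d`; hence `cdim C ≤ odim C`. -/
theorem closed_of_open_of_intersectionComplete {n d : ℕ} (C : Set (Finset (Fin n)))
    (hempty : ∅ ∈ C) (hIC : ∀ c₁ ∈ C, ∀ c₂ ∈ C, c₁ ∩ c₂ ∈ C)
    (h : HasOpenRealization n C d) : HasClosedRealization n C d := by
  classical
  obtain ⟨U, hconv, hopen, hcode⟩ := h
  -- the pattern of a point w.r.t. U
  set pat : EuclideanSpace ℝ (Fin d) → Finset (Fin n) :=
    fun x => Finset.univ.filter (fun i => x ∈ U i) with hpatdef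
  have pat_mem : ∀ x i, i ∈ pat x ↔ x ∈ U i := by
    intro x i; simp [hpatdef]
  have pat_code : ∀ x, pat x ∈ C := by
    intro x; rw [← hcode]; exact ⟨x, fun i => pat_mem x i⟩
  -- choose witness points and radii for each codeword
  have hchoice : ∀ c ∈ C, ∃ p : EuclideanSpace ℝ (Fin d), ∃ ε : ℝ, 0 < ε ∧
      (∀ i, i ∈ c ↔ p ∈ U i) ∧ ∀ i ∈ c, ball p ε ⊆ U i := by
    intro c hc
    rw [← hcode] at hc
    obtain ⟨p, hp⟩ := hc
    have hopenInt : IsOpen (⋂ i ∈ c, U i) :=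
      isOpen_biInter_finset (fun i _ => hopen i)
    have hpmem : p ∈ ⋂ i ∈ c, U i := by
      simp only [Set.mem_iInter]; exact fun i hi => (hp i).mp hi
    obtain ⟨ε, hε, hball⟩ := Metric.isOpen_iff.mp hopenInt p hpmem
    refine ⟨p, ε, hε, hp, fun i hi x hx => ?_⟩
    have := hball hx
    simp only [Set.mem_iInter] at this
    exact this i hi
  choose! pfun εfun hεpos hppat hpball using hchoice
  -- one global radius
  set g : Finset (Fin n) → ℝ := fun c => if c ∈ C then εfun c else 1 with hgdef
  have hgpos : ∀ c, 0 < g c := by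
    intro c
    by_cases hc : c ∈ C
    · simpa [hgdef, hc] using hεpos c hc
    · simp [hgdef, hc]
  have huniv : (Finset.univ : Finset (Finset (Fin n))).Nonempty := ⟨∅, Finset.mem_univ _⟩
  set ε : ℝ := Finset.univ.inf' huniv g with hεdef
  have hε : 0 < ε := by
    rw [hεdef, Finset.lt_inf'_iff]
    exact fun c _ => hgpos c
  have hεle : ∀ c ∈ C, ε ≤ εfun c := by
    intro c hc
    have := Finset.inf'_le g (Finset.mem_univ c)
    exact le_of_le_of_eq this (by simp [hgdef, hc] : g c = εfun c)
  -- the closed sets: the ε-cores of the U i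
  set V : Fin n → Set (EuclideanSpace ℝ (Fin d)) :=
    fun i => {x | ball x ε ⊆ U i} with hVdef
  have hVU : ∀ i, V i ⊆ U i := fun i x hx => hx (mem_ball_self hε)
  refine ⟨V, ?_, ?_, ?_⟩
  · -- convexity
    intro i x₁ hx₁ x₂ hx₂ a b ha hb hab
    intro y hy
    have hw : dist (y - (a • x₁ + b • x₂)) 0 < ε := by
      simpa [dist_eq_norm] using hy
    have h1 : x₁ + (y - (a • x₁ + b • x₂)) ∈ U i := by
      apply hx₁
      simpa [dist_eq_norm] using hw
    have h2 : x₂ + (y - (a • x₁ + b • x₂)) ∈ U i := by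
      apply hx₂
      simpa [dist_eq_norm] using hw
    have hkey : a • (x₁ + (y - (a • x₁ + b • x₂))) + b • (x₂ + (y - (a • x₁ + b • x₂))) = y := by
      have : a • (x₁ + (y - (a • x₁ + b • x₂))) + b • (x₂ + (y - (a • x₁ + b • x₂)))
          = a • x₁ + b • x₂ + (a + b) • (y - (a • x₁ + b • x₂)) := by
        module
      rw [this, hab, one_smul]
      abel
    have := hconv i h1 h2 ha hb hab
    rwa [hkey] at this
  · -- closedness
    intro i
    have : V i = ⋂ y ∈ (U i)ᶜ, {x | ε ≤ dist x y} := by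
      ext x
      simp only [hVdef, Set.mem_setOf_eq, Set.mem_iInter, Set.mem_compl_iff]
      constructor
      · intro hx y hy
        by_contra hlt
        push_neg at hlt
        exact hy (hx (by simpa [mem_ball, dist_comm] using hlt))
      · intro hx y hy
        by_contra hyU
        have := hx y hyU
        rw [mem_ball] at hy
        rw [dist_comm] at hy
        linarith
    rw [this]
    exact isClosed_biInter (fun y _ =>
      isClosed_le continuous_const (Continuous.dist continuous_id continuous_const))
  · -- the code of V is C
    ext σ
    constructor
    · rintro ⟨x, hx⟩
      -- σ equals the inf of the patterns of points of ball x ε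
      set S : Finset (Finset (Fin n)) :=
        Finset.univ.filter (fun t => ∃ y ∈ ball x ε, pat y = t) with hSdef
      have hSne : S.Nonempty := by
        refine ⟨pat x, ?_⟩
        simp only [hSdef, Finset.mem_filter, Finset.mem_univ, true_and]
        exact ⟨x, mem_ball_self hε, rfl⟩
      have hSC : ∀ t ∈ S, t ∈ C := by
        intro t ht
        simp only [hSdef, Finset.mem_filter, Finset.mem_univ, true_and] at ht
        obtain ⟨y, _, hy⟩ := ht
        rw [← hy]; exact pat_code y
      have hσ : σ = S.inf id := by
        ext j
        rw [Finset.mem_inf]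
        constructor
        · intro hj t ht
          simp only [hSdef, Finset.mem_filter, Finset.mem_univ, true_and] at ht
          obtain ⟨y, hyball, hy⟩ := ht
          have : y ∈ U j := (hx j).mp hj hyball
          rw [id, ← hy, pat_mem]
          exact this
        · intro hj
          rw [hx j]
          intro y hy
          have hmem : pat y ∈ S := by
            simp only [hSdef, Finset.mem_filter, Finset.mem_univ, true_and]
            exact ⟨y, hy, rfl⟩
          have := hj (pat y) hmem
          rw [id, pat_mem] at this
          exact this
      rw [hσ]
      exact inf_mem_of_intersectionComplete hIC S hSne hSC
    · intro hσ
      refine ⟨pfun σ, fun i => ?_⟩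
      constructor
      · intro hi
        exact fun y hy => hpball σ hσ i hi (ball_subset_ball (hεle σ hσ) hy)
      · intro hVi
        exact (hppat σ hσ i).mpr (hVU i hVi)
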